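/- arXiv:1704.03777 — 2 statements merged into one kernel-verified Lean document; each statement's English description precedes it below -/
import Mathlib

section
/- For all real x ≥ 3, x(x+1)·(ln(1+1/x))² < 1. -/
theorem key_ineq (x : ℝ) (hx : 3 ≤ x) :
    x * (x + 1) * (Real.log (1 + 1 / x)) ^ 2 < 1 := by
  have hx0 : (0:ℝ) < x := by linarith
  have hx1 : (0:ℝ) < x + 1 := by linarith
  have hy : (1:ℝ) < (x + 1) / x := by
    rw [lt_div_iff₀ hx0]; linarith
  set u := Real.sqrt ((x + 1) / x) with hu
  have hu1 : 1 < u := by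
    calc (1:ℝ) = Real.sqrt 1 := Real.sqrt_one.symm
      _ < u := Real.sqrt_lt_sqrt zero_le_one hy
  have hu0 : 0 < u := by linarith
  have hv : 0 < Real.log u := Real.log_pos hu1
  have hsinh := Real.self_lt_sinh_iff.mpr hv
  rw [Real.sinh_log hu0] at hsinh
  have hlog : Real.log (1 + 1 / x) = 2 * Real.log u := by
    rw [hu, Real.log_sqrt (le_of_lt (by positivity)),
      show (1:ℝ) + 1 / x = (x + 1) / x by field_simp]
    ring
  have husq : u ^ 2 = (x + 1) / x := Real.sq_sqrt (by positivity)
  have h1 : Real.log (1 + 1 / x) < u - u⁻¹ := by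
    rw [hlog]; linarith
  have hpos : 0 < Real.log (1 + 1 / x) := by
    rw [hlog]; linarith
  have h2 : (u - u⁻¹) ^ 2 = 1 / (x * (x + 1)) := by
    have hne : u ≠ 0 := ne_of_gt hu0
    have h3 : u - u⁻¹ = (u ^ 2 - 1) / u := by field_simp
    rw [h3, div_pow, husq]
    rw [show ((x + 1) / x - 1) ^ 2 = (1 / x) ^ 2 by field_simp; ring]
    field_simp
  have hsq : (Real.log (1 + 1 / x)) ^ 2 < 1 / (x * (x + 1)) := by
    rw [← h2]
    exact pow_lt_pow_left₀ h1 (le_of_lt hpos) (by norm_num)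
  calc x * (x + 1) * (Real.log (1 + 1 / x)) ^ 2
      < x * (x + 1) * (1 / (x * (x + 1))) := by
        apply mul_lt_mul_of_pos_left hsq (by positivity)
    _ = 1 := by field_simp
end

section
/- For h(x) = (x+1)(1+1/x)^x and H(x) = h(x) - h(x-1), the limit of H(x) as x → ∞ equals e. -/
open Real Filter

noncomputable def h (x : ℝ) : ℝ := (x + 1) * (1 + 1 / x) ^ x

noncomputable def g (x : ℝ) : ℝ := (1 + 1 / x) ^ x * ((x + 1) * Real.log (1 + 1 / x))

lemma h_hasDerivAt {x : ℝ} (hx : 0 < x) : HasDerivAt h (g x) x := by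
  have hb : (0:ℝ) < 1 + 1 / x := by positivity
  have h1 : HasDerivAt (fun y : ℝ => 1 + 1 / y) (-(x ^ 2)⁻¹) x := by
    simpa [one_div] using (hasDerivAt_inv hx.ne').const_add 1
  have h2 := (h1.rpow (hasDerivAt_id x) hb)
  have h3 : HasDerivAt h (1 * (1 + 1 / x) ^ x + (x + 1) * (-(x ^ 2)⁻¹ * x * (1 + 1 / x) ^ (x - 1) + 1 * (1 + 1 / x) ^ x * log (1 + 1 / x))) x :=
    ((hasDerivAt_id x).add_const 1).mul h2
  convert h3 using 1
  have hsub : (1 + 1 / x) ^ (x - 1) = (1 + 1 / x) ^ x / (1 + 1 / x) := by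
    rw [Real.rpow_sub hb, Real.rpow_one]
  simp only [g, id, hsub]
  field_simp
  ring

lemma g_tendsto : Tendsto g atTop (nhds (Real.exp 1)) := by
  have A : Tendsto (fun x : ℝ => (1 + 1 / x) ^ x) atTop (nhds (Real.exp 1)) := by
    simpa using tendsto_one_add_div_rpow_exp 1
  have hbase : Tendsto (fun x : ℝ => 1 + 1 / x) atTop (nhds 1) := by
    have := tendsto_inv_atTop_zero (𝕜 := ℝ)
    simpa [one_div] using tendsto_const_nhds.add this
  have B : Tendsto (fun x : ℝ => (x + 1) * Real.log (1 + 1 / x)) atTop (nhds 1) := by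
    have hmul : Tendsto (fun x : ℝ => (1 + 1 / x) ^ x * (1 + 1 / x)) atTop
        (nhds (Real.exp 1)) := by
      simpa using A.mul hbase
    have hlog : Tendsto (fun x : ℝ => Real.log ((1 + 1 / x) ^ x * (1 + 1 / x)))
        atTop (nhds 1) := by
      have := (Real.continuousAt_log (Real.exp_pos 1).ne').tendsto.comp hmul
      simpa [Real.log_exp, Function.comp_def] using this
    refine hlog.congr' ?_
    filter_upwards [eventually_gt_atTop (0:ℝ)] with x hx
    have hb : (0:ℝ) < 1 + 1 / x := by positivity
    rw [Real.log_mul (Real.rpow_pos_of_pos hb x).ne' hb.ne', Real.log_rpow hb]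
    ring
  have := A.mul B
  rw [mul_one] at this
  exact this

theorem H_tendsto :
    Tendsto (fun x : ℝ => h x - h (x - 1)) atTop (nhds (Real.exp 1)) := by
  rw [Metric.tendsto_atTop]
  intro ε hε
  obtain ⟨N₀, hN₀⟩ := Metric.tendsto_atTop.1 g_tendsto ε hε
  refine ⟨max N₀ 1 + 1, fun x hx => ?_⟩
  have hx1 : (1:ℝ) ≤ x - 1 := by
    have := le_max_right N₀ 1; linarith
  have hlt : x - 1 < x := by linarith
  have hmvt := exists_hasDerivAt_eq_slope h g hlt
    (fun t ht => (h_hasDerivAt (by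
      rcases ht with ⟨ht1, _⟩; linarith)).continuousAt.continuousWithinAt)
    (fun t ht => h_hasDerivAt (by rcases ht with ⟨ht1, _⟩; linarith))
  obtain ⟨c, hc, hceq⟩ := hmvt
  have hcN : N₀ ≤ c := by
    have := le_max_left N₀ 1
    have := hc.1; linarith
  have : g c = h x - h (x - 1) := by
    rw [hceq]; field_simp; ring
  rw [← this]
  exact hN₀ c hcN
end
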